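/- Lower bound of contrastive loss by supervised loss (finite population version): Let classes c be drawn from a finite set C with distribution p, and for each class let S(c) be a finite nonempty set of unit-norm features with class mean μ̃_c = (1/|S(c)|) Σ_{x∈S(c)} φ(x). Define γ = P(c⁺ = c⁻) for c⁺, c⁻ drawn i.i.d. from p, and the supervised loss L*_sup = −E[ E_{x∈S(c⁺)}[ φ(x)^⊤(μ̃_{c⁺} − μ̃_{c⁻}) ] | c⁺ ≠ c⁻ ]. Then E_{c⁺}E_{x,x⁺∈S(c⁺)²}[ −φ(x)^⊤φ(x⁺)/τ + log E_{c⁻, x⁻∈S(c⁻)}[ exp(φ(x)^⊤φ(x⁻)/τ) ] ] ≥ ((1−γ)/τ)·L*_sup, for any τ > 0. -/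

import Mathlib

open Finset

lemma my_log_jensen {ι : Type*} (s : Finset ι) (w t : ι → ℝ)
    (hw : ∀ i ∈ s, 0 ≤ w i) (hw1 : ∑ i ∈ s, w i = 1) :
    ∑ i ∈ s, w i * t i ≤ Real.log (∑ i ∈ s, w i * Real.exp (t i)) := by
  have h := convexOn_exp.map_sum_le hw hw1 (fun i _ => Set.mem_univ (t i))
  simp only [smul_eq_mul] at h
  calc ∑ i ∈ s, w i * t i = Real.log (Real.exp (∑ i ∈ s, w i * t i)) := (Real.log_exp _).symm
  _ ≤ _ := Real.log_le_log (Real.exp_pos _) h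


/-- Lower bound of the expected contrastive loss by the supervised mean-classifier
loss (finite population version): with class distribution `p`, class feature sets
`S c` of unit vectors, class means `μt c`, collision probability `γ = ∑_c p(c)²`,
and supervised loss `Lsup`, the expected contrastive loss is at least
`((1-γ)/τ)·Lsup`. -/
theorem stmt_8 {E : Type*} [NormedAddCommGroup E] [InnerProductSpace ℝ E]
    {C : Type*} [Fintype C] [DecidableEq C]
    (p : C → ℝ) (hp0 : ∀ c, 0 ≤ p c) (hp1 : ∑ c, p c = 1)
    (S : C → Finset E) (hS : ∀ c, (S c).Nonempty)
    (hunit : ∀ c, ∀ x ∈ S c, ‖x‖ = 1)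
    (μt : C → E) (hμt : ∀ c, μt c = (((S c).card : ℝ)⁻¹) • ∑ x ∈ S c, x)
    (τ : ℝ) (hτ : 0 < τ)
    (γ : ℝ) (hγ : γ = ∑ c, p c ^ 2) (hγ1 : γ < 1)
    (Lsup : ℝ)
    (hLsup : Lsup = -(1 - γ)⁻¹ *
        ∑ cp, ∑ cm, (if cp = cm then 0 else
          p cp * p cm * (((S cp).card : ℝ)⁻¹ *
            ∑ x ∈ S cp, (inner ℝ x (μt cp - μt cm) : ℝ)))) :
    ((1 - γ) / τ) * Lsup ≤
      ∑ cp, p cp * (((S cp).card : ℝ)⁻¹ * ((S cp).card : ℝ)⁻¹ *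
        ∑ x ∈ S cp, ∑ xp ∈ S cp,
          (-((inner ℝ x xp : ℝ) / τ)
            + Real.log (∑ cm, p cm * (((S cm).card : ℝ)⁻¹ *
                ∑ xm ∈ S cm, Real.exp ((inner ℝ x xm : ℝ) / τ))))) := by
  have hn : ∀ c, ((S c).card : ℝ) ≠ 0 := fun c =>
    Nat.cast_ne_zero.mpr (card_pos.mpr (hS c)).ne'
  -- sub-lemma A: sums of inner products equal card * inner with mean
  have hA : ∀ c (x : E), ∑ y ∈ S c, (inner ℝ x y : ℝ) = ((S c).card : ℝ) * (inner ℝ x (μt c) : ℝ) := by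
    intro c x
    rw [hμt, inner_smul_right, inner_sum]
    field_simp
  -- Jensen step
  have hJ : ∀ x : E,
      ∑ cm, p cm * (((S cm).card : ℝ)⁻¹ * ∑ xm ∈ S cm, (inner ℝ x xm : ℝ) / τ) ≤
      Real.log (∑ cm, p cm * (((S cm).card : ℝ)⁻¹ *
        ∑ xm ∈ S cm, Real.exp ((inner ℝ x xm : ℝ) / τ))) := by
    intro x
    have key := my_log_jensen (Finset.univ.sigma (fun c : C => S c))
      (fun q => p q.1 * (((S q.1).card : ℝ))⁻¹) (fun q => (inner ℝ x q.2 : ℝ) / τ)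
      (fun q _ => mul_nonneg (hp0 q.1) (inv_nonneg.mpr (Nat.cast_nonneg _)))
      (by
        rw [Finset.sum_sigma]
        simp only [sum_const, nsmul_eq_mul]
        rw [← hp1]
        exact Finset.sum_congr rfl fun c _ => by field_simp)
    rw [Finset.sum_sigma, Finset.sum_sigma] at key
    calc ∑ cm, p cm * (((S cm).card : ℝ)⁻¹ * ∑ xm ∈ S cm, (inner ℝ x xm : ℝ) / τ)
        = ∑ cm, ∑ xm ∈ S cm, p cm * ((S cm).card : ℝ)⁻¹ * ((inner ℝ x xm : ℝ) / τ) := by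
          refine Finset.sum_congr rfl fun c _ => ?_
          rw [mul_sum, mul_sum]
          exact Finset.sum_congr rfl fun y _ => by ring
      _ ≤ _ := by
          refine le_trans key (le_of_eq ?_)
          congr 1
          refine Finset.sum_congr rfl fun c _ => ?_
          rw [mul_sum, mul_sum]
          exact Finset.sum_congr rfl fun y _ => by ring
  have h1γ : (1 : ℝ) - γ ≠ 0 := sub_ne_zero.mpr (ne_of_gt hγ1)
  -- T simplification
  have hT : ∀ x : E, ∑ cm, p cm * (((S cm).card : ℝ)⁻¹ * ∑ xm ∈ S cm, (inner ℝ x xm : ℝ) / τ)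
      = ∑ cm, p cm * (inner ℝ x (μt cm) : ℝ) / τ := by
    intro x
    refine Finset.sum_congr rfl fun cm _ => ?_
    rw [← Finset.sum_div, hA]
    field_simp
  -- bracket simplification
  have hbr : ∀ cp : C, ∀ x ∈ S cp,
      ∑ xp ∈ S cp, (-((inner ℝ x xp : ℝ) / τ)
          + ∑ cm, p cm * (((S cm).card : ℝ)⁻¹ * ∑ xm ∈ S cm, (inner ℝ x xm : ℝ) / τ))
      = ((S cp).card : ℝ) * ((∑ cm, p cm * (inner ℝ x (μt cm - μt cp) : ℝ)) / τ) := by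
    intro cp x hx
    rw [Finset.sum_add_distrib, Finset.sum_const, nsmul_eq_mul, hT]
    have e1 : ∑ xp ∈ S cp, -((inner ℝ x xp : ℝ) / τ)
        = -(((S cp).card : ℝ) * (inner ℝ x (μt cp) : ℝ) / τ) := by
      rw [Finset.sum_neg_distrib, ← Finset.sum_div, hA]
    rw [e1]
    have e2 : ∑ cm, p cm * (inner ℝ x (μt cm - μt cp) : ℝ)
        = (∑ cm, p cm * (inner ℝ x (μt cm) : ℝ)) - (inner ℝ x (μt cp) : ℝ) := by
      simp only [inner_sub_right, mul_sub]
      rw [Finset.sum_sub_distrib, ← Finset.sum_mul, hp1, one_mul]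
    rw [e2, ← Finset.sum_div]
    ring
  -- per-class identity
  have hper : ∀ cp : C, p cp * (((S cp).card : ℝ)⁻¹ * ((S cp).card : ℝ)⁻¹ *
        ∑ x ∈ S cp, ∑ xp ∈ S cp,
          (-((inner ℝ x xp : ℝ) / τ)
            + ∑ cm, p cm * (((S cm).card : ℝ)⁻¹ * ∑ xm ∈ S cm, (inner ℝ x xm : ℝ) / τ)))
      = ∑ cm, (p cp * p cm * (((S cp).card : ℝ)⁻¹ *
          ∑ x ∈ S cp, (inner ℝ x (μt cm - μt cp) : ℝ))) / τ := by
    intro cp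
    rw [Finset.sum_congr rfl (hbr cp)]
    have e4 : ∀ x ∈ S cp, ((S cp).card : ℝ) * ((∑ cm, p cm * (inner ℝ x (μt cm - μt cp) : ℝ)) / τ)
        = ∑ cm, (((S cp).card : ℝ) / τ) * (p cm * (inner ℝ x (μt cm - μt cp) : ℝ)) := by
      intro x _
      rw [← Finset.mul_sum]
      ring
    rw [Finset.sum_congr rfl e4, Finset.sum_comm, Finset.mul_sum, Finset.mul_sum]
    refine Finset.sum_congr rfl fun cm _ => ?_
    rw [← Finset.mul_sum, ← Finset.mul_sum]
    have := hn cp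
    field_simp
  -- identify LHS with the lower bound
  have hLHS : ((1 - γ) / τ) * Lsup
      = ∑ cp, ∑ cm, (p cp * p cm * (((S cp).card : ℝ)⁻¹ *
          ∑ x ∈ S cp, (inner ℝ x (μt cm - μt cp) : ℝ))) / τ := by
    rw [hLsup]
    have e3 : ∀ cp cm : C, (p cp * p cm * (((S cp).card : ℝ)⁻¹ *
          ∑ x ∈ S cp, (inner ℝ x (μt cm - μt cp) : ℝ))) / τ
        = -(if cp = cm then 0 else
            p cp * p cm * (((S cp).card : ℝ)⁻¹ *
              ∑ x ∈ S cp, (inner ℝ x (μt cp - μt cm) : ℝ))) / τ := by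
      intro cp cm
      by_cases h : cp = cm
      · subst h
        simp
      · simp only [h, if_false]
        have : ∑ x ∈ S cp, (inner ℝ x (μt cm - μt cp) : ℝ)
            = -∑ x ∈ S cp, (inner ℝ x (μt cp - μt cm) : ℝ) := by
          rw [← Finset.sum_neg_distrib]
          exact Finset.sum_congr rfl fun x _ => by
            rw [← inner_neg_right, neg_sub]
        rw [this]
        ring
    simp only [e3]
    simp only [neg_div, Finset.sum_neg_distrib, ← Finset.sum_div]
    field_simp
  rw [hLHS, ← Finset.sum_congr rfl fun cp _ => hper cp]
  refine Finset.sum_le_sum fun cp _ => ?_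
  refine mul_le_mul_of_nonneg_left ?_ (hp0 cp)
  refine mul_le_mul_of_nonneg_left ?_
    (mul_nonneg (inv_nonneg.mpr (Nat.cast_nonneg _)) (inv_nonneg.mpr (Nat.cast_nonneg _)))
  refine Finset.sum_le_sum fun x _ => ?_
  refine Finset.sum_le_sum fun xp _ => ?_
  exact add_le_add_right (hJ x) _
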